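/- The partial traces over B₂ of the S operators satisfy: Tr_{B₂}[S^+] = (d(d+2)/(2(d+1)))(I_{AB₁} - Φ_{AB₁}), Tr_{B₂}[S^-] = (d(d-2)/(2(d-1)))(I_{AB₁} - Φ_{AB₁}), Tr_{B₂}[S^0] = (d/(d²-1))(I_{AB₁} - Φ_{AB₁}) + dΦ_{AB₁}, Tr_{B₂}[S^1] = Φ_{AB₁} - (1/(d²-1))(I_{AB₁} - Φ_{AB₁}), Tr_{B₂}[S^2] = √(d²-1) Φ_{AB₁} - (I_{AB₁} - Φ_{AB₁})/√(d²-1), and Tr_{B₂}[S^3] = 0. -/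

import Mathlib

open Matrix
open scoped ComplexOrder

noncomputable section

/-- Swap of systems `A` and `B₁` on `ℂ^d ⊗ ℂ^d ⊗ ℂ^d`. -/
def VAB1 (d : ℕ) : Matrix (Fin d × Fin d × Fin d) (Fin d × Fin d × Fin d) ℂ :=
  Matrix.of fun p q => if p.1 = q.2.1 ∧ p.2.1 = q.1 ∧ p.2.2 = q.2.2 then 1 else 0

/-- Swap of systems `A` and `B₂`. -/
def VAB2 (d : ℕ) : Matrix (Fin d × Fin d × Fin d) (Fin d × Fin d × Fin d) ℂ :=
  Matrix.of fun p q => if p.1 = q.2.2 ∧ p.2.1 = q.2.1 ∧ p.2.2 = q.1 then 1 else 0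

/-- Swap of systems `B₁` and `B₂`. -/
def VB1B2 (d : ℕ) : Matrix (Fin d × Fin d × Fin d) (Fin d × Fin d × Fin d) ℂ :=
  Matrix.of fun p q => if p.1 = q.1 ∧ p.2.1 = q.2.2 ∧ p.2.2 = q.2.1 then 1 else 0

/-- The 3-cycle permutation operator `V_{AB₁B₂} = ∑ |k⟩⟨i| ⊗ |i⟩⟨j| ⊗ |j⟩⟨k|`. -/
def VAB1B2 (d : ℕ) : Matrix (Fin d × Fin d × Fin d) (Fin d × Fin d × Fin d) ℂ :=
  Matrix.of fun p q => if p.1 = q.2.2 ∧ p.2.1 = q.1 ∧ p.2.2 = q.2.1 then 1 else 0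

/-- The 3-cycle permutation operator `V_{B₂B₁A} = ∑ |j⟩⟨i| ⊗ |k⟩⟨j| ⊗ |i⟩⟨k|`. -/
def VB2B1A (d : ℕ) : Matrix (Fin d × Fin d × Fin d) (Fin d × Fin d × Fin d) ℂ :=
  Matrix.of fun p q => if p.1 = q.2.1 ∧ p.2.1 = q.2.2 ∧ p.2.2 = q.1 then 1 else 0

/-- Partial transpose on the first (`A`) factor. -/
def ptA {d : ℕ} (X : Matrix (Fin d × Fin d × Fin d) (Fin d × Fin d × Fin d) ℂ) :
    Matrix (Fin d × Fin d × Fin d) (Fin d × Fin d × Fin d) ℂ :=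
  Matrix.of fun p q => X (q.1, p.2) (p.1, q.2)

def Splus (d : ℕ) : Matrix (Fin d × Fin d × Fin d) (Fin d × Fin d × Fin d) ℂ :=
  (2 : ℂ)⁻¹ • (1 + VB1B2 d -
    ((d : ℂ) + 1)⁻¹ • (ptA (VAB1 d) + ptA (VAB2 d) + ptA (VAB1B2 d) + ptA (VB2B1A d)))

def Sminus (d : ℕ) : Matrix (Fin d × Fin d × Fin d) (Fin d × Fin d × Fin d) ℂ :=
  (2 : ℂ)⁻¹ • (1 - VB1B2 d -
    ((d : ℂ) - 1)⁻¹ • (ptA (VAB1 d) + ptA (VAB2 d) - ptA (VAB1B2 d) - ptA (VB2B1A d)))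

def S0 (d : ℕ) : Matrix (Fin d × Fin d × Fin d) (Fin d × Fin d × Fin d) ℂ :=
  ((d : ℂ) ^ 2 - 1)⁻¹ •
    ((d : ℂ) • (ptA (VAB1 d) + ptA (VAB2 d)) - (ptA (VAB1B2 d) + ptA (VB2B1A d)))

def S1 (d : ℕ) : Matrix (Fin d × Fin d × Fin d) (Fin d × Fin d × Fin d) ℂ :=
  ((d : ℂ) ^ 2 - 1)⁻¹ •
    ((d : ℂ) • (ptA (VAB1B2 d) + ptA (VB2B1A d)) - (ptA (VAB1 d) + ptA (VAB2 d)))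

def S2 (d : ℕ) : Matrix (Fin d × Fin d × Fin d) (Fin d × Fin d × Fin d) ℂ :=
  ((Real.sqrt ((d : ℝ) ^ 2 - 1) : ℂ))⁻¹ • (ptA (VAB1 d) - ptA (VAB2 d))

def S3 (d : ℕ) : Matrix (Fin d × Fin d × Fin d) (Fin d × Fin d × Fin d) ℂ :=
  (Complex.I / (Real.sqrt ((d : ℝ) ^ 2 - 1) : ℂ)) • (ptA (VAB1B2 d) - ptA (VB2B1A d))

/-- Partial trace over the last (`B₂`) factor. -/
def ptrB2 {d : ℕ} (X : Matrix (Fin d × Fin d × Fin d) (Fin d × Fin d × Fin d) ℂ) :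
    Matrix (Fin d × Fin d) (Fin d × Fin d) ℂ :=
  Matrix.of fun p q => ∑ b : Fin d, X (p.1, p.2, b) (q.1, q.2, b)

/-- The maximally entangled state `Φ = (1/d) ∑_{i,j} |ii⟩⟨jj|` on `AB₁`. -/
def PhiME (d : ℕ) : Matrix (Fin d × Fin d) (Fin d × Fin d) ℂ :=
  Matrix.of fun p q => if p.1 = p.2 ∧ q.1 = q.2 then (d : ℂ)⁻¹ else 0


section Helpers
variable {d : ℕ}

lemma ptrB2_add (X Y : Matrix (Fin d × Fin d × Fin d) (Fin d × Fin d × Fin d) ℂ) :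
    ptrB2 (X + Y) = ptrB2 X + ptrB2 Y := by
  ext p q; simp [ptrB2, Finset.sum_add_distrib]

lemma ptrB2_sub (X Y : Matrix (Fin d × Fin d × Fin d) (Fin d × Fin d × Fin d) ℂ) :
    ptrB2 (X - Y) = ptrB2 X - ptrB2 Y := by
  ext p q; simp [ptrB2, Finset.sum_sub_distrib]

lemma ptrB2_smul (c : ℂ) (X : Matrix (Fin d × Fin d × Fin d) (Fin d × Fin d × Fin d) ℂ) :
    ptrB2 (c • X) = c • ptrB2 X := by
  ext p q; simp [ptrB2, Finset.mul_sum]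

lemma ptrB2_one : ptrB2 (1 : Matrix (Fin d × Fin d × Fin d) (Fin d × Fin d × Fin d) ℂ)
    = (d : ℂ) • 1 := by
  ext ⟨p1, p2⟩ ⟨q1, q2⟩
  simp only [ptrB2, Matrix.of_apply, Matrix.one_apply, Matrix.smul_apply, smul_eq_mul,
    Prod.mk.injEq]
  by_cases h : p1 = q1 ∧ p2 = q2 <;>
    simp [h, Finset.sum_const, mul_comm]

lemma ptrB2_VB1B2 : ptrB2 (VB1B2 d) = 1 := by
  ext ⟨p1, p2⟩ ⟨q1, q2⟩
  simp only [ptrB2, VB1B2, Matrix.of_apply, Matrix.one_apply, Prod.mk.injEq]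
  by_cases h : p1 = q1 ∧ p2 = q2
  · obtain ⟨h1, h2⟩ := h; subst h1 h2
    rw [Finset.sum_eq_single p2
      (fun b _ hb => by rw [if_neg]; rintro ⟨-, hp, -⟩; exact hb hp.symm) (by simp)]
    simp
  · rw [Finset.sum_eq_zero
      (fun b _ => by rw [if_neg]; rintro ⟨h1, h2, h3⟩; exact h ⟨h1, h2.trans h3⟩), if_neg h]

lemma ptrB2_ptA_VAB1 : ptrB2 (ptA (VAB1 d)) = ((d : ℂ) ^ 2) • PhiME d := by
  ext ⟨p1, p2⟩ ⟨q1, q2⟩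
  simp only [ptrB2, ptA, VAB1, PhiME, Matrix.of_apply, Matrix.smul_apply, smul_eq_mul]
  by_cases h : p1 = p2 ∧ q1 = q2
  · obtain ⟨h1, h2⟩ := h; subst h1 h2
    have hd0 : (d : ℂ) ≠ 0 := Nat.cast_ne_zero.mpr p1.pos.ne'
    simp [Finset.sum_const]
    rw [sq, mul_assoc, mul_inv_cancel₀ hd0, mul_one]
  · have hc : ¬(q1 = q2 ∧ p2 = p1 ∧ True) := by tauto
    rw [Finset.sum_eq_zero (fun b _ => by rw [if_neg hc]), if_neg h, mul_zero]

lemma ptrB2_ptA_VAB2 : ptrB2 (ptA (VAB2 d)) = 1 := by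
  ext ⟨p1, p2⟩ ⟨q1, q2⟩
  simp only [ptrB2, ptA, VAB2, Matrix.of_apply, Matrix.one_apply, Prod.mk.injEq]
  by_cases h : p1 = q1 ∧ p2 = q2
  · obtain ⟨h1, h2⟩ := h; subst h1 h2
    rw [Finset.sum_eq_single p1
      (fun b _ hb => by rw [if_neg]; rintro ⟨hq, -, -⟩; exact hb hq.symm) (by simp)]
    simp
  · rw [Finset.sum_eq_zero
      (fun b _ => by rw [if_neg]; rintro ⟨h1, h2, h3⟩; exact h ⟨(h1.trans h3).symm, h2⟩),
      if_neg h]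

lemma ptrB2_ptA_VAB1B2 : ptrB2 (ptA (VAB1B2 d)) = (d : ℂ) • PhiME d := by
  ext ⟨p1, p2⟩ ⟨q1, q2⟩
  simp only [ptrB2, ptA, VAB1B2, PhiME, Matrix.of_apply, Matrix.smul_apply, smul_eq_mul]
  by_cases h : p1 = p2 ∧ q1 = q2
  · obtain ⟨h1, h2⟩ := h; subst h1 h2
    have hd0 : (d : ℂ) ≠ 0 := Nat.cast_ne_zero.mpr p1.pos.ne'
    rw [Finset.sum_eq_single q1
      (fun b _ hb => by rw [if_neg]; rintro ⟨hq, -, -⟩; exact hb hq.symm) (by simp)]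
    simp [hd0]
  · rw [Finset.sum_eq_zero
      (fun b _ => by rw [if_neg]; rintro ⟨h1, h2, h3⟩; exact h ⟨h2.symm, h1.trans h3⟩),
      if_neg h, mul_zero]

lemma ptrB2_ptA_VB2B1A : ptrB2 (ptA (VB2B1A d)) = (d : ℂ) • PhiME d := by
  ext ⟨p1, p2⟩ ⟨q1, q2⟩
  simp only [ptrB2, ptA, VB2B1A, PhiME, Matrix.of_apply, Matrix.smul_apply, smul_eq_mul]
  by_cases h : p1 = p2 ∧ q1 = q2
  · obtain ⟨h1, h2⟩ := h; subst h1 h2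
    have hd0 : (d : ℂ) ≠ 0 := Nat.cast_ne_zero.mpr p1.pos.ne'
    rw [Finset.sum_eq_single p1
      (fun b _ hb => by rw [if_neg]; rintro ⟨-, hp, -⟩; exact hb hp.symm) (by simp)]
    simp [hd0]
  · rw [Finset.sum_eq_zero
      (fun b _ => by rw [if_neg]; rintro ⟨h1, h2, h3⟩; exact h ⟨(h2.trans h3).symm, h1⟩),
      if_neg h, mul_zero]

end Helpers

/-- The partial traces over `B₂` of the `S` operators. -/
theorem S_ops_ptrB2 (d : ℕ) (hd : 2 ≤ d) :
    ptrB2 (Splus d) = ((d : ℂ) * ((d : ℂ) + 2) / (2 * ((d : ℂ) + 1))) • (1 - PhiME d) ∧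
    ptrB2 (Sminus d) = ((d : ℂ) * ((d : ℂ) - 2) / (2 * ((d : ℂ) - 1))) • (1 - PhiME d) ∧
    ptrB2 (S0 d) = ((d : ℂ) / ((d : ℂ) ^ 2 - 1)) • (1 - PhiME d) + (d : ℂ) • PhiME d ∧
    ptrB2 (S1 d) = PhiME d - (((d : ℂ) ^ 2 - 1))⁻¹ • (1 - PhiME d) ∧
    ptrB2 (S2 d) = ((Real.sqrt ((d : ℝ) ^ 2 - 1) : ℂ)) • PhiME d -
      ((Real.sqrt ((d : ℝ) ^ 2 - 1) : ℂ))⁻¹ • (1 - PhiME d) ∧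
    ptrB2 (S3 d) = 0 := by
  have hd0 : (d : ℂ) ≠ 0 := Nat.cast_ne_zero.mpr (by omega)
  have hd1 : (d : ℂ) + 1 ≠ 0 := by
    have h : ((d + 1 : ℕ) : ℂ) ≠ 0 := Nat.cast_ne_zero.mpr (by omega)
    simpa using h
  have hdm1 : (d : ℂ) - 1 ≠ 0 := sub_ne_zero.mpr (by
    intro h; exact absurd (Nat.cast_eq_one.mp h) (by omega))
  have hd2 : (d : ℂ) ^ 2 - 1 ≠ 0 := by
    have h : (d : ℂ) ^ 2 - 1 = ((d : ℂ) - 1) * ((d : ℂ) + 1) := by ring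
    rw [h]; exact mul_ne_zero hdm1 hd1
  have hsr : (0 : ℝ) < (d : ℝ) ^ 2 - 1 := by
    have h : (2 : ℝ) ≤ d := by exact_mod_cast hd
    nlinarith
  have hs : ((Real.sqrt ((d : ℝ) ^ 2 - 1) : ℝ) : ℂ) ≠ 0 := by
    rw [Complex.ofReal_ne_zero]
    exact (Real.sqrt_pos.mpr hsr).ne'
  have hsq : ((Real.sqrt ((d : ℝ) ^ 2 - 1) : ℝ) : ℂ) ^ 2 = (d : ℂ) ^ 2 - 1 := by
    rw [← Complex.ofReal_pow, Real.sq_sqrt hsr.le]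
    push_cast; ring
  refine ⟨?_, ?_, ?_, ?_, ?_, ?_⟩
  all_goals
    simp only [Splus, Sminus, S0, S1, S2, S3, ptrB2_smul, ptrB2_sub, ptrB2_add, ptrB2_one,
      ptrB2_VB1B2, ptrB2_ptA_VAB1, ptrB2_ptA_VAB2, ptrB2_ptA_VAB1B2, ptrB2_ptA_VB2B1A]
    set sq2 : ℂ := ((Real.sqrt ((d : ℝ) ^ 2 - 1) : ℝ) : ℂ) with hsq2_def
    clear_value sq2
    ext ⟨i1, i2⟩ ⟨j1, j2⟩
    simp only [Matrix.sub_apply, Matrix.add_apply, Matrix.smul_apply, Matrix.one_apply,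
      PhiME, Matrix.of_apply, smul_eq_mul, Matrix.zero_apply, Prod.mk.injEq]
    split_ifs <;> field_simp <;>
      first
      | ring1
      | linear_combination ((d : ℂ) ^ 2 * sq2) * hsq
      | linear_combination (-((d : ℂ) ^ 2) * sq2) * hsq
      | linear_combination (-1 : ℂ) * hsq

end
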